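/- For every v > 0, ∫₀^{v} ∫₀^{v} ( αβ / (α² + β²) )³ dβ dα = v²/16, where the (bounded) integrand is extended by 0 at the origin. -/

import Mathlib

lemma inner_int (α : ℝ) (hα : 0 < α) (v : ℝ) :
    ∫ β in (0:ℝ)..v, (α * β / (α ^ 2 + β ^ 2)) ^ 3
      = v ^ 4 * α / (4 * (α ^ 2 + v ^ 2) ^ 2) := by
  have key : ∀ β : ℝ, HasDerivAt
      (fun β : ℝ => α ^ 3 * (-(2 * (α ^ 2 + β ^ 2))⁻¹ + α ^ 2 * (4 * (α ^ 2 + β ^ 2) ^ 2)⁻¹))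
      ((α * β / (α ^ 2 + β ^ 2)) ^ 3) β := by
    intro β
    have hd : (0:ℝ) < α ^ 2 + β ^ 2 := by positivity
    have hu : HasDerivAt (fun β : ℝ => α ^ 2 + β ^ 2) (2 * β) β := by
      simpa using ((hasDerivAt_pow 2 β).const_add (α ^ 2))
    have h1 : HasDerivAt (fun β : ℝ => (2 * (α ^ 2 + β ^ 2))⁻¹)
        (-(2 * (2 * β)) / (2 * (α ^ 2 + β ^ 2)) ^ 2) β :=
      (hu.const_mul 2).inv (by positivity)
    have h2 : HasDerivAt (fun β : ℝ => (4 * (α ^ 2 + β ^ 2) ^ 2)⁻¹)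
        (-(4 * (2 * (α ^ 2 + β ^ 2) ^ 1 * (2 * β))) / (4 * (α ^ 2 + β ^ 2) ^ 2) ^ 2) β :=
      ((hu.pow 2).const_mul 4).inv (by show (4:ℝ) * (α ^ 2 + β ^ 2) ^ 2 ≠ 0; positivity)
    have h3 := ((h1.neg.add (h2.const_mul (α ^ 2))).const_mul (α ^ 3))
    convert h3 using 1
    · rfl
    · rfl
    · rfl
    field_simp
    ring
  have hcont : Continuous (fun β : ℝ => (α * β / (α ^ 2 + β ^ 2)) ^ 3) := by
    apply Continuous.pow
    exact (continuous_const.mul continuous_id).div (by continuity)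
      (fun β => by positivity)
  rw [intervalIntegral.integral_eq_sub_of_hasDerivAt (fun β _ => key β)
    (hcont.intervalIntegrable 0 v)]
  have h0 : (0:ℝ) < α ^ 2 + v ^ 2 := by positivity
  field_simp
  ring

theorem stmt11 (v : ℝ) (hv : 0 < v) :
    ∫ α in (0 : ℝ)..v, ∫ β in (0 : ℝ)..v, (α * β / (α ^ 2 + β ^ 2)) ^ 3 = v ^ 2 / 16 := by
  have hcongr : ∀ α ∈ Set.uIcc (0:ℝ) v,
      (∫ β in (0:ℝ)..v, (α * β / (α ^ 2 + β ^ 2)) ^ 3)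
        = v ^ 4 * α / (4 * (α ^ 2 + v ^ 2) ^ 2) := by
    intro α hα
    rcases eq_or_lt_of_le ((Set.uIcc_of_le hv.le ▸ hα).1) with h | h
    · simp [← h]
    · exact inner_int α h v
  rw [intervalIntegral.integral_congr hcongr]
  have key : ∀ α : ℝ, HasDerivAt (fun α : ℝ => -(8 * (α ^ 2 + v ^ 2))⁻¹ * v ^ 4)
      (v ^ 4 * α / (4 * (α ^ 2 + v ^ 2) ^ 2)) α := by
    intro α
    have hd : (0:ℝ) < α ^ 2 + v ^ 2 := by positivity
    have hu : HasDerivAt (fun α : ℝ => α ^ 2 + v ^ 2) (2 * α) α := by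
      simpa using ((hasDerivAt_pow 2 α).add_const (v ^ 2))
    have h1 : HasDerivAt (fun α : ℝ => (8 * (α ^ 2 + v ^ 2))⁻¹)
        (-(8 * (2 * α)) / (8 * (α ^ 2 + v ^ 2)) ^ 2) α :=
      (hu.const_mul 8).inv (by positivity)
    have h2 := h1.neg.mul_const (v ^ 4)
    convert h2 using 1
    · rfl
    · rfl
    · rfl
    field_simp
    ring
  have hcont : Continuous (fun α : ℝ => v ^ 4 * α / (4 * (α ^ 2 + v ^ 2) ^ 2)) := by
    exact (continuous_const.mul continuous_id).div (by continuity)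
      (fun α => by positivity)
  rw [intervalIntegral.integral_eq_sub_of_hasDerivAt (fun α _ => key α)
    (hcont.intervalIntegrable 0 v)]
  have h0 : (0:ℝ) < v ^ 2 := by positivity
  field_simp
  ring
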